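/- Let A, R, G, α be T-periodic continuous functions with values: A(t) an n×n real matrix, R(t), G(t) symmetric positive semidefinite n×n matrices, α(t) ∈ ℝ. Suppose P, Q are continuously differentiable T-periodic n×n-matrix-valued functions satisfying P'(t) = A(t)P(t) + P(t)A(t)ᵀ + α(t)P(t) + R(t) and −Q'(t) = A(t)ᵀQ(t) + Q(t)A(t) + α(t)Q(t) + G(t) for all t. Then ∫₀ᵀ trace(Q(t)R(t)) dt = ∫₀ᵀ trace(P(t)G(t)) dt. -/

import Mathlib

open Matrix MeasureTheory

theorem stmt_4 (n : ℕ) (T : ℝ) (hT : 0 < T)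
    (A R G : ℝ → Matrix (Fin n) (Fin n) ℝ) (α : ℝ → ℝ)
    (hAcont : ∀ i j, Continuous fun t => A t i j)
    (hRcont : ∀ i j, Continuous fun t => R t i j)
    (hGcont : ∀ i j, Continuous fun t => G t i j)
    (hαcont : Continuous α)
    (hAper : ∀ t, A (t + T) = A t) (hRper : ∀ t, R (t + T) = R t)
    (hGper : ∀ t, G (t + T) = G t) (hαper : ∀ t, α (t + T) = α t)
    (hRpsd : ∀ t, (R t).PosSemidef) (hGpsd : ∀ t, (G t).PosSemidef)
    (P Q P' Q' : ℝ → Matrix (Fin n) (Fin n) ℝ)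
    (hPdiff : ∀ t i j, HasDerivAt (fun s => P s i j) (P' t i j) t)
    (hQdiff : ∀ t i j, HasDerivAt (fun s => Q s i j) (Q' t i j) t)
    (hPper : ∀ t, P (t + T) = P t) (hQper : ∀ t, Q (t + T) = Q t)
    (hPeq : ∀ t, P' t = A t * P t + P t * (A t)ᵀ + α t • P t + R t)
    (hQeq : ∀ t, -Q' t = (A t)ᵀ * Q t + Q t * A t + α t • Q t + G t) :
    ∫ t in (0 : ℝ)..T, (Q t * R t).trace = ∫ t in (0 : ℝ)..T, (P t * G t).trace := by
  -- continuity of entries of P and Q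
  have hPcont : ∀ i j, Continuous fun t => P t i j := fun i j =>
    continuous_iff_continuousAt.2 fun t => (hPdiff t i j).continuousAt
  have hQcont : ∀ i j, Continuous fun t => Q t i j := fun i j =>
    continuous_iff_continuousAt.2 fun t => (hQdiff t i j).continuousAt
  -- derivative of trace(Q P)
  have hf : ∀ t : ℝ, HasDerivAt (fun s => (Q s * P s).trace)
      ((Q t * R t).trace - (P t * G t).trace) t := by
    intro t
    have key : HasDerivAt (fun s => (Q s * P s).trace)
        ((Q' t * P t).trace + (Q t * P' t).trace) t := by
      have heq : (fun s => (Q s * P s).trace)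
          = fun s => ∑ i, ∑ k, Q s i k * P s k i := by
        funext s; simp [Matrix.trace, Matrix.mul_apply, Matrix.diag]
      rw [heq]
      have h : HasDerivAt (fun s => ∑ i, ∑ k, Q s i k * P s k i)
          (∑ i : Fin n, ∑ k : Fin n, (Q' t i k * P t k i + Q t i k * P' t k i)) t :=
        HasDerivAt.fun_sum fun i _ => HasDerivAt.fun_sum fun k _ =>
          (hQdiff t i k).fun_mul (hPdiff t k i)
      convert h using 1
      simp [Matrix.trace, Matrix.mul_apply, Matrix.diag, Finset.sum_add_distrib]
    have hq : Q' t = -((A t)ᵀ * Q t + Q t * A t + α t • Q t + G t) := by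
      have := hQeq t; rw [← this, neg_neg]
    have htr : (Q' t * P t).trace + (Q t * P' t).trace
        = (Q t * R t).trace - (P t * G t).trace := by
      rw [hq, hPeq t]
      have c1 : (Q t * (P t * (A t)ᵀ)).trace = ((A t)ᵀ * Q t * P t).trace := by
        rw [← Matrix.mul_assoc, Matrix.trace_mul_cycle]
      have c2 : (G t * P t).trace = (P t * G t).trace := Matrix.trace_mul_comm _ _
      simp only [Matrix.neg_mul, Matrix.add_mul, Matrix.mul_add, Matrix.trace_neg,
        Matrix.trace_add, Matrix.smul_mul, Matrix.mul_smul, Matrix.trace_smul,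
        Matrix.mul_assoc] at *
      rw [c1, c2]
      ring
    rw [← htr]; exact key
  -- continuity of the integrands
  have hcQR : Continuous fun t => (Q t * R t).trace := by
    simp only [Matrix.trace, Matrix.mul_apply, Matrix.diag]
    exact continuous_finset_sum _ fun i _ => continuous_finset_sum _ fun k _ =>
      (hQcont i k).mul (hRcont k i)
  have hcPG : Continuous fun t => (P t * G t).trace := by
    simp only [Matrix.trace, Matrix.mul_apply, Matrix.diag]
    exact continuous_finset_sum _ fun i _ => continuous_finset_sum _ fun k _ =>
      (hPcont i k).mul (hGcont k i)
  have hint : ∫ t in (0:ℝ)..T, ((Q t * R t).trace - (P t * G t).trace) = 0 := by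
    have := intervalIntegral.integral_eq_sub_of_hasDerivAt
      (f := fun s => (Q s * P s).trace)
      (fun t _ => hf t) ((hcQR.sub hcPG).intervalIntegrable 0 T)
    rw [this]
    have : Q T * P T = Q 0 * P 0 := by
      have h1 := hQper 0; have h2 := hPper 0
      simp only [zero_add] at h1 h2
      rw [h1, h2]
    show (Q T * P T).trace - (Q 0 * P 0).trace = 0
    rw [this, sub_self]
  have i1 : IntervalIntegrable (fun t => (Q t * R t).trace) volume 0 T :=
    hcQR.intervalIntegrable 0 T
  have i2 : IntervalIntegrable (fun t => (P t * G t).trace) volume 0 T :=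
    hcPG.intervalIntegrable 0 T
  rw [intervalIntegral.integral_sub i1 i2] at hint
  linarith
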